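/- Bounds on the coefficient in the Wishart low-degree likelihood ratio (Lemma coef). Let Dₙ = o(N) (N = Nₙ → ∞). There exist absolute constants c₁, c₂ > 0 such that, for all sufficiently large N and all 1 ≤ d ≤ Dₙ: (2N)^d / d! ≤ ∑_{d₁,…,d_N ≥ 0, ∑ᵢ dᵢ = d} ∏_{i=1}^{N} C(2dᵢ, dᵢ) ≤ c₁ · d^{3/2} · e^{c₂ d²/N} · (2N)^d / d!. -/

import Mathlib

open Filter

/-- The coefficient `∑_{d₁+⋯+d_N = d} ∏ᵢ C(2dᵢ, dᵢ)` appearing in the Wishart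
low-degree likelihood ratio. -/
def wishartCoef (N d : ℕ) : ℕ :=
  ∑ t ∈ Finset.Nat.antidiagonalTuple N d, ∏ i, Nat.choose (2 * t i) (t i)

section Aux

open Finset Polynomial

private lemma wishartCoef_succ (N d : ℕ) :
    wishartCoef (N + 1) d =
      ∑ ij ∈ Finset.HasAntidiagonal.antidiagonal d,
        Nat.choose (2 * ij.1) ij.1 * wishartCoef N ij.2 := by
  unfold wishartCoef
  simp_rw [Finset.mul_sum]
  rw [← Finset.sum_sigma (Finset.HasAntidiagonal.antidiagonal d) (fun ij => Finset.Nat.antidiagonalTuple N ij.2)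
    (fun p => Nat.choose (2*p.1.1) p.1.1 * ∏ i, Nat.choose (2*p.2 i) (p.2 i))]
  refine Finset.sum_nbij' (fun t => ⟨(t 0, d - t 0), Fin.tail t⟩)
    (fun p => Fin.cons p.1.1 p.2) ?_ ?_ ?_ ?_ ?_
  · intro t ht
    rw [Finset.Nat.mem_antidiagonalTuple] at ht
    have h0 : t 0 + ∑ i : Fin N, t i.succ = d := by
      rw [← ht, Fin.sum_univ_succ]
    refine Finset.mem_sigma.mpr ⟨?_, ?_⟩
    · simp only [Finset.HasAntidiagonal.mem_antidiagonal]; omega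
    · rw [Finset.Nat.mem_antidiagonalTuple]
      simp only [Fin.tail]
      omega
  · intro p hp
    rw [Finset.mem_sigma, Finset.HasAntidiagonal.mem_antidiagonal, Finset.Nat.mem_antidiagonalTuple] at hp
    rw [Finset.Nat.mem_antidiagonalTuple, Fin.sum_univ_succ]
    simp only [Fin.cons_zero, Fin.cons_succ]
    rw [hp.2]; exact hp.1
  · intro t ht
    simp [Fin.cons_self_tail]
  · intro p hp
    rw [Finset.mem_sigma, Finset.HasAntidiagonal.mem_antidiagonal, Finset.Nat.mem_antidiagonalTuple] at hp
    have : d - p.1.1 = p.1.2 := by omega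
    simp [Fin.tail_cons, this]
  · intro t ht
    rw [Fin.prod_univ_succ]
    rfl

private lemma desc_smeval_prod (r : ℝ) (k : ℕ) :
    (descPochhammer ℤ k).smeval r = ∏ j ∈ range k, (r - j) := by
  induction k with
  | zero => simp [descPochhammer_zero, Polynomial.smeval_one]
  | succ k ih =>
    rw [descPochhammer_succ_right, Polynomial.smeval_mul, ih, prod_range_succ,
      Polynomial.smeval_sub, Polynomial.smeval_X, Polynomial.smeval_natCast]
    ring

private lemma vand (r s : ℝ) (d : ℕ) :
    ∏ j ∈ range d, (r + s - j) =
      ∑ ij ∈ antidiagonal d, (d.choose ij.1 : ℝ) *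
        ((∏ j ∈ range ij.1, (r - j)) * ∏ j ∈ range ij.2, (s - j)) := by
  have h := Ring.descPochhammer_smeval_add (R := ℝ) (r := r) (s := s) d (Commute.all r s)
  simpa [desc_smeval_prod] using h

private lemma prod_half (x : ℝ) (m : ℕ) :
    ∏ j ∈ range m, (-(x / 2) - (j : ℝ)) = (-1/2 : ℝ) ^ m * ∏ j ∈ range m, (x + 2 * j) := by
  calc ∏ j ∈ range m, (-(x / 2) - (j : ℝ))
      = ∏ j ∈ range m, ((-1/2 : ℝ) * (x + 2 * j)) := prod_congr rfl fun j _ => by ring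
    _ = _ := by rw [prod_mul_distrib, prod_const, card_range]

private lemma Q_vand (N d : ℕ) :
    ∏ j ∈ range d, ((N : ℝ) + 1 + 2 * j) =
      ∑ ij ∈ antidiagonal d, (d.choose ij.1 : ℝ) *
        ((∏ j ∈ range ij.1, (1 + 2 * (j:ℝ))) * ∏ j ∈ range ij.2, ((N:ℝ) + 2 * j)) := by
  have h := vand (-(1/2 : ℝ)) (-((N : ℝ)/2)) d
  rw [show ((-(1/2:ℝ)) + (-((N : ℝ)/2))) = -(((N:ℝ)+1)/2) by ring] at h
  rw [prod_half ((N:ℝ)+1) d] at h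
  have h2 : ∀ ij ∈ antidiagonal d, (d.choose ij.1 : ℝ) *
        ((∏ j ∈ range ij.1, (-(1/2:ℝ) - j)) * ∏ j ∈ range ij.2, (-((N:ℝ)/2) - j)) =
      (-1/2 : ℝ)^d * ((d.choose ij.1 : ℝ) *
        ((∏ j ∈ range ij.1, (1 + 2*(j:ℝ))) * ∏ j ∈ range ij.2, ((N:ℝ) + 2 * j))) := by
    intro ij hij
    have hd : ij.1 + ij.2 = d := Finset.HasAntidiagonal.mem_antidiagonal.mp hij
    have e1 : ∏ j ∈ range ij.1, (-(1/2:ℝ) - (j:ℝ)) =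
        (-1/2 : ℝ)^ij.1 * ∏ j ∈ range ij.1, (1 + 2*(j:ℝ)) := by
      simpa using prod_half 1 ij.1
    have e2 := prod_half (N:ℝ) ij.2
    rw [e1, e2, ← hd, pow_add]
    ring
  rw [Finset.sum_congr rfl h2, ← Finset.mul_sum] at h
  have hne : ((-1/2 : ℝ)^d) ≠ 0 := by positivity
  exact mul_left_cancel₀ hne h

private lemma cb_eq (k : ℕ) : ((2*k).choose k : ℝ) =
    2^k / k.factorial * ∏ j ∈ range k, (1 + 2 * (j:ℝ)) := by
  induction k with
  | zero => simp
  | succ k ih =>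
    have h := Nat.succ_mul_centralBinom_succ k
    have h' : ((k:ℝ)+1) * ((2*(k+1)).choose (k+1)) = 2*(2*k+1)*((2*k).choose k) := by
      have := congrArg (fun x : ℕ => (x : ℝ)) h
      push_cast [Nat.centralBinom] at this ⊢
      convert this using 2
    have hk1 : ((k:ℝ)+1) ≠ 0 := by positivity
    have hfac : (k.factorial : ℝ) ≠ 0 := Nat.cast_ne_zero.mpr k.factorial_ne_zero
    rw [prod_range_succ]
    have : ((2*(k+1)).choose (k+1) : ℝ) = 2*(2*k+1)*((2*k).choose k) / ((k:ℝ)+1) := by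
      field_simp at h' ⊢; linarith [h']
    rw [this, ih, Nat.factorial_succ]
    push_cast
    field_simp
    ring

private lemma wishartCoef_eq (N d : ℕ) :
    (wishartCoef N d : ℝ) = 2^d / d.factorial * ∏ j ∈ range d, ((N:ℝ) + 2 * j) := by
  induction N generalizing d with
  | zero =>
    cases d with
    | zero => simp [wishartCoef]
    | succ m =>
      rw [show wishartCoef 0 (m+1) = 0 by
        simp [wishartCoef, Finset.Nat.antidiagonalTuple_zero_succ]]
      rw [prod_eq_zero (mem_range.mpr (Nat.succ_pos m)) (by norm_num)]
      simp
  | succ N ih =>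
    rw [wishartCoef_succ]
    push_cast
    have key : ∀ ij ∈ antidiagonal d,
        (((2 * ij.1).choose ij.1 : ℝ)) * (wishartCoef N ij.2 : ℝ) =
        2^d / d.factorial * ((d.choose ij.1 : ℝ) *
          ((∏ j ∈ range ij.1, (1 + 2 * (j:ℝ))) * ∏ j ∈ range ij.2, ((N:ℝ) + 2 * j))) := by
      intro ij hij
      have hd : ij.1 + ij.2 = d := Finset.HasAntidiagonal.mem_antidiagonal.mp hij
      subst hd
      rw [cb_eq, ih]
      have hch : (((ij.1+ij.2)).choose ij.1 : ℝ) * ij.1.factorial * ij.2.factorial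
          = ((ij.1+ij.2)).factorial := by
        have := Nat.choose_mul_factorial_mul_factorial (Nat.le_add_right ij.1 ij.2)
        rw [show ij.1 + ij.2 - ij.1 = ij.2 by omega] at this
        exact_mod_cast congrArg (fun x : ℕ => (x:ℝ)) this
      have h1 : (ij.1.factorial : ℝ) ≠ 0 := Nat.cast_ne_zero.mpr ij.1.factorial_ne_zero
      have h2 : (ij.2.factorial : ℝ) ≠ 0 := Nat.cast_ne_zero.mpr ij.2.factorial_ne_zero
      have h3 : (((ij.1+ij.2)).factorial : ℝ) ≠ 0 :=
        Nat.cast_ne_zero.mpr ((ij.1+ij.2)).factorial_ne_zero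
      have hC : ((ij.1+ij.2).choose ij.1 : ℝ) ≠ 0 := by
        have : 0 < (ij.1+ij.2).choose ij.1 := Nat.choose_pos (Nat.le_add_right ij.1 ij.2)
        exact_mod_cast this.ne'
      rw [show (((ij.1+ij.2).factorial:ℝ))
          = (ij.1+ij.2).choose ij.1 * ij.1.factorial * ij.2.factorial from hch.symm,
        pow_add]
      field_simp
    rw [Finset.sum_congr rfl key, ← Finset.mul_sum, ← Q_vand N d]

end Aux

/-- **Bounds on the coefficient in the Wishart LDLR** (Lemma coef).
If `Dₙ = o(N)` with `N = Nₙ → ∞`, then there exist absolute constants `c₁, c₂ > 0`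
such that for all sufficiently large `N` (i.e. all sufficiently large `n`) and all
`1 ≤ d ≤ Dₙ`,
`(2N)^d/d! ≤ ∑_{∑dᵢ=d} ∏ C(2dᵢ,dᵢ) ≤ c₁ d^{3/2} e^{c₂ d²/N} (2N)^d/d!`. -/
theorem wishart_coef_bounds (N D : ℕ → ℕ)
    (hN : Tendsto (fun n => N n) atTop atTop)
    (hD : Tendsto (fun n => (D n : ℝ) / N n) atTop (nhds 0)) :
    ∃ c₁ c₂ : ℝ, 0 < c₁ ∧ 0 < c₂ ∧
      ∀ᶠ n in atTop, ∀ d : ℕ, 1 ≤ d → d ≤ D n →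
        (2 * (N n : ℝ)) ^ d / Nat.factorial d ≤ (wishartCoef (N n) d : ℝ) ∧
        (wishartCoef (N n) d : ℝ) ≤
          c₁ * (d : ℝ) ^ ((3 : ℝ) / 2) * Real.exp (c₂ * (d : ℝ) ^ 2 / N n) *
            (2 * (N n : ℝ)) ^ d / Nat.factorial d := by
  classical
  refine ⟨1, 2, one_pos, two_pos, ?_⟩
  filter_upwards [hN.eventually_ge_atTop 1] with n hn d hd1 _
  set M : ℝ := (N n : ℝ) with hM
  have hM1 : (1 : ℝ) ≤ M := Nat.one_le_cast.mpr hn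
  have hM0 : (0 : ℝ) < M := lt_of_lt_of_le one_pos hM1
  have hfac : (0 : ℝ) < (d.factorial : ℝ) := by
    exact_mod_cast d.factorial_pos
  rw [wishartCoef_eq]
  constructor
  · -- lower bound
    have hMle : M ^ d ≤ ∏ j ∈ Finset.range d, (M + 2 * j) := by
      calc M ^ d = ∏ _j ∈ Finset.range d, M := by
            rw [Finset.prod_const, Finset.card_range]
        _ ≤ ∏ j ∈ Finset.range d, (M + 2 * j) := by
            refine Finset.prod_le_prod (fun j _ => hM0.le) (fun j _ => ?_)
            have : (0:ℝ) ≤ 2 * j := by positivity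
            linarith
    rw [mul_pow]
    calc (2:ℝ) ^ d * M ^ d / (d.factorial : ℝ)
        ≤ 2 ^ d * (∏ j ∈ Finset.range d, (M + 2 * j)) / (d.factorial : ℝ) := by
          gcongr
      _ = 2 ^ d / (d.factorial : ℝ) * ∏ j ∈ Finset.range d, (M + 2 * j) := by ring
  · -- upper bound
    have hP : ∏ j ∈ Finset.range d, (M + 2 * j) ≤ M ^ d * Real.exp (2 * d ^ 2 / M) := by
      have step1 : ∏ j ∈ Finset.range d, (M + 2 * j) ≤
          ∏ j ∈ Finset.range d, (M * Real.exp (2 * j / M)) := by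
        refine Finset.prod_le_prod (fun j _ => by positivity) (fun j _ => ?_)
        have h := Real.add_one_le_exp (2 * (j:ℝ) / M)
        have := mul_le_mul_of_nonneg_left h hM0.le
        calc M + 2 * (j:ℝ) = M * (2 * (j:ℝ) / M + 1) := by field_simp; ring
          _ ≤ M * Real.exp (2 * j / M) := this
      have step2 : ∏ j ∈ Finset.range d, (M * Real.exp (2 * j / M)) =
          M ^ d * Real.exp (∑ j ∈ Finset.range d, 2 * (j:ℝ) / M) := by
        rw [Finset.prod_mul_distrib, Finset.prod_const, Finset.card_range, Real.exp_sum]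
      have step3 : ∑ j ∈ Finset.range d, 2 * (j:ℝ) / M ≤ 2 * d ^ 2 / M := by
        have hb : ∀ j ∈ Finset.range d, 2 * (j:ℝ) / M ≤ 2 * d / M := by
          intro j hj
          have : (j:ℝ) ≤ d := by
            exact_mod_cast (Finset.mem_range.mp hj).le
          gcongr
        calc ∑ j ∈ Finset.range d, 2 * (j:ℝ) / M
            ≤ ∑ _j ∈ Finset.range d, 2 * (d:ℝ) / M := Finset.sum_le_sum hb
          _ = d * (2 * (d:ℝ) / M) := by rw [Finset.sum_const, Finset.card_range]; ring
          _ = 2 * (d:ℝ) ^ 2 / M := by ring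
      calc ∏ j ∈ Finset.range d, (M + 2 * j)
          ≤ M ^ d * Real.exp (∑ j ∈ Finset.range d, 2 * (j:ℝ) / M) := step2 ▸ step1
        _ ≤ M ^ d * Real.exp (2 * d ^ 2 / M) := by
            gcongr
    have hd32 : (1:ℝ) ≤ (d : ℝ) ^ ((3:ℝ)/2) := by
      refine Real.one_le_rpow ?_ (by norm_num)
      exact_mod_cast hd1
    calc 2 ^ d / (d.factorial : ℝ) * ∏ j ∈ Finset.range d, (M + 2 * j)
        ≤ 2 ^ d / (d.factorial : ℝ) * (M ^ d * Real.exp (2 * d ^ 2 / M)) := by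
          gcongr
      _ = Real.exp (2 * (d:ℝ) ^ 2 / M) * (2 * M) ^ d / (d.factorial : ℝ) := by
          rw [mul_pow]; ring
      _ ≤ 1 * (d : ℝ) ^ ((3:ℝ)/2) * Real.exp (2 * (d:ℝ) ^ 2 / M) * (2 * M) ^ d
            / (d.factorial : ℝ) := by
          rw [one_mul]
          have hpos : (0:ℝ) ≤ Real.exp (2 * (d:ℝ) ^ 2 / M) * (2 * M) ^ d / (d.factorial : ℝ) := by
            positivity
          calc Real.exp (2 * (d:ℝ) ^ 2 / M) * (2 * M) ^ d / (d.factorial : ℝ)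
              ≤ (d : ℝ) ^ ((3:ℝ)/2) *
                  (Real.exp (2 * (d:ℝ) ^ 2 / M) * (2 * M) ^ d / (d.factorial : ℝ)) :=
                le_mul_of_one_le_left hpos hd32
            _ = (d : ℝ) ^ ((3:ℝ)/2) * Real.exp (2 * (d:ℝ) ^ 2 / M) * (2 * M) ^ d
                  / (d.factorial : ℝ) := by ring
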